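/- arXiv:math/0202241 — 2 statements merged into one kernel-verified Lean document; each statement's English description precedes it below -/
import Mathlib

section
/- (Kharitonov's Theorem for real polynomials) The real interval polynomial family Γ of order n is Hurwitz stable if and only if its four Kharitonov polynomials K_1, K_2, K_3, K_4 are Hurwitz stable. -/
open Polynomial

/-- A polynomial is Hurwitz stable if all its complex roots have negative real part. -/
def Hurwitz {R : Type} [CommRing R] [Algebra R ℂ] (p : R[X]) : Prop :=
  ∀ z : ℂ, Polynomial.aeval z p = 0 → z.re < 0

/-- The real interval polynomial family with coefficient bounds `lo`, `hi`. -/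
def intervalFamily (lo hi : ℕ → ℝ) : Set ℝ[X] :=
  {p | ∀ i, p.coeff i ∈ Set.Icc (lo i) (hi i)}

/-- Kharitonov-type vertex polynomial: the `i`-th coefficient is `hi i` when
`i % 4 ∈ hiRes`, and `lo i` otherwise. -/
noncomputable def kpoly (n : ℕ) (lo hi : ℕ → ℝ) (hiRes : Finset ℕ) : ℝ[X] :=
  ∑ i ∈ Finset.range (n + 1),
    Polynomial.C (if i % 4 ∈ hiRes then hi i else lo i) * Polynomial.X ^ i

namespace KHaux

open Complex Finset

noncomputable def cm (p : ℝ[X]) : ℂ[X] := p.map (algebraMap ℝ ℂ)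

lemma aeval_eq (p : ℝ[X]) (z : ℂ) : Polynomial.aeval z p = (cm p).eval z := by
  rw [cm, Polynomial.aeval_def, Polynomial.eval_map]

lemma coeff_cm (p : ℝ[X]) (k : ℕ) : (cm p).coeff k = (p.coeff k : ℂ) := by
  simp [cm, Polynomial.coeff_map]

lemma coeff_kpoly (n : ℕ) (lo hi : ℕ → ℝ) (S : Finset ℕ) (k : ℕ) :
    (kpoly n lo hi S).coeff k =
      if k ≤ n then (if k % 4 ∈ S then hi k else lo k) else 0 := by
  unfold kpoly
  rw [Polynomial.finset_sum_coeff]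
  simp only [Polynomial.coeff_C_mul, Polynomial.coeff_X_pow, mul_ite, mul_one, mul_zero]
  rw [Finset.sum_ite_eq (Finset.range (n + 1)) k]
  simp [Nat.lt_succ_iff]

lemma kpoly_mem (n : ℕ) (lo hi : ℕ → ℝ) (hle : ∀ i, lo i ≤ hi i)
    (hbeyond : ∀ i, n < i → lo i = 0 ∧ hi i = 0) (S : Finset ℕ) :
    kpoly n lo hi S ∈ intervalFamily lo hi := by
  intro k
  rw [coeff_kpoly]
  by_cases hk : k ≤ n
  · simp only [hk, if_true]
    by_cases hS : k % 4 ∈ S <;> simp [hS, Set.mem_Icc, hle k]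
  · push_neg at hk
    obtain ⟨h1, h2⟩ := hbeyond k hk
    simp [not_le.2 hk, Set.mem_Icc, h1, h2]

lemma natDegree_le_of_mem {n : ℕ} {lo hi : ℕ → ℝ} (hbeyond : ∀ i, n < i → lo i = 0 ∧ hi i = 0)
    {p : ℝ[X]} (hp : p ∈ intervalFamily lo hi) : p.natDegree ≤ n := by
  rw [Polynomial.natDegree_le_iff_coeff_eq_zero]
  intro N hN
  have := hp N
  obtain ⟨h1, h2⟩ := hbeyond N hN
  rw [Set.mem_Icc, h1, h2] at this
  linarith [this.1, this.2]

lemma natDegree_kpoly_le (n : ℕ) (lo hi : ℕ → ℝ) (S : Finset ℕ) :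
    (kpoly n lo hi S).natDegree ≤ n := by
  rw [Polynomial.natDegree_le_iff_coeff_eq_zero]
  intro N hN
  rw [coeff_kpoly]
  simp [not_le.2 hN]

lemma I_pow_mod (k : ℕ) : (I : ℂ) ^ k = I ^ (k % 4) := by
  conv_lhs => rw [← Nat.div_add_mod k 4]
  rw [pow_add, pow_mul, I_pow_four, one_pow, one_mul]

/-- Expansion of the evaluation at `I * ω`. -/
lemma eval_I_mul (p : ℝ[X]) (ω : ℝ) {N : ℕ} (hN : p.natDegree < N) :
    (cm p).eval (I * ω) = ∑ k ∈ Finset.range N, ((p.coeff k * ω ^ k : ℝ) : ℂ) * I ^ k := by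
  have hdeg : (cm p).natDegree < N :=
    lt_of_le_of_lt (Polynomial.natDegree_map_le) hN
  rw [show (cm p) = p.map (algebraMap ℝ ℂ) from rfl] at hdeg ⊢
  rw [Polynomial.eval_eq_sum_range' hdeg]
  refine Finset.sum_congr rfl fun k _ => ?_
  rw [Polynomial.coeff_map, Complex.coe_algebraMap]
  push_cast
  ring

lemma re_eval (p : ℝ[X]) (ω : ℝ) {N : ℕ} (hN : p.natDegree < N) :
    ((cm p).eval (I * ω)).re = ∑ k ∈ Finset.range N, p.coeff k * ω ^ k * (I ^ k).re := by
  rw [eval_I_mul p ω hN, Complex.re_sum]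
  refine Finset.sum_congr rfl fun k _ => ?_
  rw [Complex.re_ofReal_mul]

lemma im_eval (p : ℝ[X]) (ω : ℝ) {N : ℕ} (hN : p.natDegree < N) :
    ((cm p).eval (I * ω)).im = ∑ k ∈ Finset.range N, p.coeff k * ω ^ k * (I ^ k).im := by
  rw [eval_I_mul p ω hN, Complex.im_sum]
  refine Finset.sum_congr rfl fun k _ => ?_
  rw [Complex.im_ofReal_mul]

lemma eval_im_of_even {r : ℝ[X]} (h : ∀ k, k % 2 = 1 → r.coeff k = 0) (ω : ℝ) :
    ((cm r).eval (I * ω)).im = 0 := by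
  rw [im_eval r ω (lt_add_one _)]
  refine Finset.sum_eq_zero fun k _ => ?_
  rcases Nat.even_or_odd k with hk | hk
  · have h4 : k % 4 = 0 ∨ k % 4 = 2 := by
      obtain ⟨m, rfl⟩ := hk; omega
    rw [I_pow_mod]
    rcases h4 with h4 | h4 <;> rw [h4] <;> simp [Complex.I_sq]
  · rw [h k (Nat.odd_iff.mp hk)]; ring

lemma eval_re_of_odd {r : ℝ[X]} (h : ∀ k, k % 2 = 0 → r.coeff k = 0) (ω : ℝ) :
    ((cm r).eval (I * ω)).re = 0 := by
  rw [re_eval r ω (lt_add_one _)]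
  refine Finset.sum_eq_zero fun k _ => ?_
  rcases Nat.even_or_odd k with hk | hk
  · rw [h k (Nat.even_iff.mp hk)]; ring
  · have h4 : k % 4 = 1 ∨ k % 4 = 3 := by
      obtain ⟨m, hm⟩ := hk; omega
    rw [I_pow_mod]
    rcases h4 with h4 | h4 <;> rw [h4] <;> simp [pow_succ, Complex.I_sq]

end KHaux
namespace KHaux
open Complex

/-- Phase quantity of `q` at `w`. -/
noncomputable def ph (q : ℂ[X]) (w : ℂ) : ℝ :=
  ((starRingEnd ℂ) (q.eval w) * (I * (Polynomial.derivative q).eval w)).im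

lemma phase_aux : ∀ N (q : ℂ[X]), q.natDegree = N → q ≠ 0 →
    (∀ z : ℂ, q.eval z = 0 → z.re < 0) → ∀ w : ℂ, w.re = 0 →
      0 ≤ ph q w ∧ (1 ≤ N → 0 < ph q w) := by
  intro N
  induction N using Nat.strong_induction_on with
  | _ N IH =>
    intro q hdeg hq0 hroots w hw
    rcases Nat.eq_zero_or_pos N with h0 | h1
    · subst h0
      obtain ⟨c, rfl⟩ := Polynomial.natDegree_eq_zero.mp hdeg
      constructor
      · simp [ph]
      · omega
    · have hdegne : q.degree ≠ 0 := by
        rw [Polynomial.degree_eq_natDegree hq0, hdeg]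
        exact_mod_cast by omega
      obtain ⟨z, hz⟩ := IsAlgClosed.exists_root q hdegne
      have hzre : z.re < 0 := hroots z hz
      obtain ⟨r, hr⟩ := Polynomial.dvd_iff_isRoot.mpr hz
      have hrne : r ≠ 0 := by
        rintro rfl; rw [mul_zero] at hr; exact hq0 hr
      have hXz : (X - C z : ℂ[X]) ≠ 0 := Polynomial.X_sub_C_ne_zero z
      have hdr : r.natDegree = N - 1 := by
        have := Polynomial.natDegree_mul hXz hrne
        rw [← hr, hdeg, Polynomial.natDegree_X_sub_C] at this
        omega
      have hrroots : ∀ z' : ℂ, r.eval z' = 0 → z'.re < 0 := by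
        intro z' hz'
        apply hroots
        rw [hr, Polynomial.eval_mul, hz', mul_zero]
      have hIH := IH (N - 1) (by omega) r hdr hrne hrroots w hw
      set u : ℂ := w - z with hu
      set F : ℂ := r.eval w with hF
      set D : ℂ := (Polynomial.derivative r).eval w with hD
      have hqe : q.eval w = u * F := by
        rw [hr, Polynomial.eval_mul]
        simp [hu, hF]
      have hqd : (Polynomial.derivative q).eval w = F + u * D := by
        rw [hr, Polynomial.derivative_mul]
        simp only [Polynomial.derivative_sub, Polynomial.derivative_X,
          Polynomial.derivative_C, sub_zero, one_mul]
        rw [Polynomial.eval_add, Polynomial.eval_mul]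
        simp [hu, hF, hD]
      have hFne : F ≠ 0 := by
        intro h
        have := hrroots w h
        rw [hw] at this; exact lt_irrefl 0 this
      have key : (starRingEnd ℂ) (q.eval w) * (I * (Polynomial.derivative q).eval w)
          = (I * (starRingEnd ℂ) u) * ((starRingEnd ℂ) F * F)
            + ((starRingEnd ℂ) u * u) * ((starRingEnd ℂ) F * (I * D)) := by
        rw [hqe, hqd, map_mul]; ring
      have hcFF : (starRingEnd ℂ) F * F = (Complex.normSq F : ℂ) := by
        rw [mul_comm, Complex.mul_conj]
      have hcuu : (starRingEnd ℂ) u * u = (Complex.normSq u : ℂ) := by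
        rw [mul_comm, Complex.mul_conj]
      have him : ph q w = u.re * Complex.normSq F
          + Complex.normSq u * ((starRingEnd ℂ) F * (I * D)).im := by
        rw [ph, key, Complex.add_im, hcFF, hcuu]
        congr 1
        · simp [Complex.mul_im, Complex.I_mul_im]
        · simp [Complex.mul_im]
      have hure : 0 < u.re := by
        simp [hu, Complex.sub_re, hw]; linarith
      have hF2 : 0 < Complex.normSq F := Complex.normSq_pos.mpr hFne
      have hterm2 : 0 ≤ Complex.normSq u * ((starRingEnd ℂ) F * (I * D)).im :=
        mul_nonneg (Complex.normSq_nonneg u) hIH.1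
      constructor
      · rw [him]
        have : 0 < u.re * Complex.normSq F := mul_pos hure hF2
        linarith
      · intro _
        rw [him]
        have : 0 < u.re * Complex.normSq F := mul_pos hure hF2
        linarith

end KHaux
namespace KHaux
open Complex

lemma aeval_conj (p : ℝ[X]) (z : ℂ) :
    Polynomial.aeval ((starRingEnd ℂ) z) p = (starRingEnd ℂ) (Polynomial.aeval z p) := by
  rw [aeval_eq, aeval_eq, Polynomial.eval_eq_sum_range, Polynomial.eval_eq_sum_range, map_sum]
  refine Finset.sum_congr rfl fun k _ => ?_
  rw [map_mul, map_pow, coeff_cm p k, Complex.conj_ofReal]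

lemma share_odd {p q : ℝ[X]} (h : ∀ k, k % 2 = 1 → p.coeff k = q.coeff k) (ω : ℝ) :
    ((cm p).eval (I * ω)).im = ((cm q).eval (I * ω)).im ∧
    ((Polynomial.derivative (cm p)).eval (I * ω)).re
      = ((Polynomial.derivative (cm q)).eval (I * ω)).re := by
  have hc : ∀ k, k % 2 = 1 → (p - q).coeff k = 0 := fun k hk => by
    rw [Polynomial.coeff_sub, h k hk, sub_self]
  have hmap : cm (p - q) = cm p - cm q := by
    simp only [cm, Polynomial.map_sub]
  constructor
  · have := eval_im_of_even hc ω
    rw [hmap, Polynomial.eval_sub, Complex.sub_im, sub_eq_zero] at this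
    exact this
  · have hc' : ∀ k, k % 2 = 0 → (Polynomial.derivative (p - q)).coeff k = 0 := fun k hk => by
      rw [Polynomial.coeff_derivative, hc (k + 1) (by omega), zero_mul]
    have := eval_re_of_odd hc' ω
    rw [show cm (Polynomial.derivative (p - q))
          = Polynomial.derivative (cm (p - q)) from
        (Polynomial.derivative_map _ _).symm, hmap, Polynomial.derivative_sub,
      Polynomial.eval_sub, Complex.sub_re, sub_eq_zero] at this
    exact this

lemma share_even {p q : ℝ[X]} (h : ∀ k, k % 2 = 0 → p.coeff k = q.coeff k) (ω : ℝ) :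
    ((cm p).eval (I * ω)).re = ((cm q).eval (I * ω)).re ∧
    ((Polynomial.derivative (cm p)).eval (I * ω)).im
      = ((Polynomial.derivative (cm q)).eval (I * ω)).im := by
  have hc : ∀ k, k % 2 = 0 → (p - q).coeff k = 0 := fun k hk => by
    rw [Polynomial.coeff_sub, h k hk, sub_self]
  have hmap : cm (p - q) = cm p - cm q := by
    simp only [cm, Polynomial.map_sub]
  constructor
  · have := eval_re_of_odd hc ω
    rw [hmap, Polynomial.eval_sub, Complex.sub_re, sub_eq_zero] at this
    exact this
  · have hc' : ∀ k, k % 2 = 1 → (Polynomial.derivative (p - q)).coeff k = 0 := fun k hk => by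
      rw [Polynomial.coeff_derivative, hc (k + 1) (by omega), zero_mul]
    have := eval_im_of_even hc' ω
    rw [show cm (Polynomial.derivative (p - q))
          = Polynomial.derivative (cm (p - q)) from
        (Polynomial.derivative_map _ _).symm, hmap, Polynomial.derivative_sub,
      Polynomial.eval_sub, Complex.sub_im, sub_eq_zero] at this
    exact this

lemma ph_of_real (q : ℂ[X]) (w : ℂ) (a : ℝ) (h : q.eval w = (a : ℂ)) :
    ph q w = a * ((Polynomial.derivative q).eval w).re := by
  rw [ph, h, Complex.conj_ofReal, Complex.im_ofReal_mul, Complex.I_mul_im]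

lemma ph_of_imag (q : ℂ[X]) (w : ℂ) (b : ℝ) (h : q.eval w = (b : ℂ) * I) :
    ph q w = b * ((Polynomial.derivative q).eval w).im := by
  rw [ph, h]
  have hkey : (starRingEnd ℂ) ((b : ℂ) * I) * (I * (Polynomial.derivative q).eval w)
      = (b : ℂ) * (Polynomial.derivative q).eval w := by
    rw [map_mul, Complex.conj_ofReal, Complex.conj_I]
    calc (b : ℂ) * -I * (I * (Polynomial.derivative q).eval w)
        = (b : ℂ) * (Polynomial.derivative q).eval w * (-(I * I)) := by ring
      _ = _ := by rw [Complex.I_mul_I]; ring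
  rw [hkey, Complex.im_ofReal_mul]

lemma cmp_re {p q : ℝ[X]} {m : ℕ} (hp : p.natDegree ≤ m) (hq : q.natDegree ≤ m) (ω : ℝ)
    (h : ∀ k, p.coeff k * (I ^ (k % 4)).re ≤ q.coeff k * (I ^ (k % 4)).re) (hω : 0 ≤ ω) :
    ((cm p).eval (I * ω)).re ≤ ((cm q).eval (I * ω)).re := by
  rw [re_eval p ω (Nat.lt_succ_of_le hp), re_eval q ω (Nat.lt_succ_of_le hq)]
  refine Finset.sum_le_sum fun k _ => ?_
  rw [I_pow_mod]
  have hωk : 0 ≤ ω ^ k := pow_nonneg hω k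
  calc p.coeff k * ω ^ k * (I ^ (k % 4)).re
      = p.coeff k * (I ^ (k % 4)).re * ω ^ k := by ring
    _ ≤ q.coeff k * (I ^ (k % 4)).re * ω ^ k := mul_le_mul_of_nonneg_right (h k) hωk
    _ = q.coeff k * ω ^ k * (I ^ (k % 4)).re := by ring

lemma cmp_im {p q : ℝ[X]} {m : ℕ} (hp : p.natDegree ≤ m) (hq : q.natDegree ≤ m) (ω : ℝ)
    (h : ∀ k, p.coeff k * (I ^ (k % 4)).im ≤ q.coeff k * (I ^ (k % 4)).im) (hω : 0 ≤ ω) :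
    ((cm p).eval (I * ω)).im ≤ ((cm q).eval (I * ω)).im := by
  rw [im_eval p ω (Nat.lt_succ_of_le hp), im_eval q ω (Nat.lt_succ_of_le hq)]
  refine Finset.sum_le_sum fun k _ => ?_
  rw [I_pow_mod]
  have hωk : 0 ≤ ω ^ k := pow_nonneg hω k
  calc p.coeff k * ω ^ k * (I ^ (k % 4)).im
      = p.coeff k * (I ^ (k % 4)).im * ω ^ k := by ring
    _ ≤ q.coeff k * (I ^ (k % 4)).im * ω ^ k := mul_le_mul_of_nonneg_right (h k) hωk
    _ = q.coeff k * ω ^ k * (I ^ (k % 4)).im := by ring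

end KHaux
namespace KHaux
open Complex

lemma no_imag_root (n : ℕ) (lo hi : ℕ → ℝ)
    (hle : ∀ i, lo i ≤ hi i)
    (hbeyond : ∀ i, n < i → lo i = 0 ∧ hi i = 0)
    (hlead : (0 : ℝ) ∉ Set.Icc (lo n) (hi n))
    (hn : 1 ≤ n)
    (h1 : Hurwitz (kpoly n lo hi {2, 3})) (h2 : Hurwitz (kpoly n lo hi {0, 1}))
    (h3 : Hurwitz (kpoly n lo hi {0, 3})) (h4 : Hurwitz (kpoly n lo hi {1, 2}))
    {p : ℝ[X]} (hp : p ∈ intervalFamily lo hi) {z : ℂ} (hz : z.re = 0) :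
    Polynomial.aeval z p ≠ 0 := by
  intro h0
  set K1 := kpoly n lo hi {2, 3} with hK1def
  set K2 := kpoly n lo hi {0, 1} with hK2def
  set K3 := kpoly n lo hi {0, 3} with hK3def
  set K4 := kpoly n lo hi {1, 2} with hK4def
  -- leading coefficient bounds
  have hlon : lo n ≠ 0 := by
    intro h; exact hlead (Set.mem_Icc.2 ⟨le_of_eq h, h ▸ hle n⟩)
  have hhin : hi n ≠ 0 := by
    intro h; exact hlead (Set.mem_Icc.2 ⟨h ▸ hle n, le_of_eq h.symm⟩)
  -- degree facts
  have hKdegle : ∀ S : Finset ℕ, (kpoly n lo hi S).natDegree ≤ n := natDegree_kpoly_le n lo hi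
  have hKcoeffn : ∀ S : Finset ℕ, (kpoly n lo hi S).coeff n ≠ 0 := by
    intro S
    rw [coeff_kpoly, if_pos (le_refl n)]
    split
    · exact hhin
    · exact hlon
  -- coefficient agreements
  have c13 : ∀ k, k % 2 = 1 → K1.coeff k = K3.coeff k := by
    intro k hk
    rw [hK1def, hK3def, coeff_kpoly, coeff_kpoly]
    have h4' : k % 4 = 1 ∨ k % 4 = 3 := by omega
    rcases h4' with h | h <;> simp [h, Finset.mem_insert, Finset.mem_singleton]
  have c24 : ∀ k, k % 2 = 1 → K2.coeff k = K4.coeff k := by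
    intro k hk
    rw [hK2def, hK4def, coeff_kpoly, coeff_kpoly]
    have h4' : k % 4 = 1 ∨ k % 4 = 3 := by omega
    rcases h4' with h | h <;> simp [h, Finset.mem_insert, Finset.mem_singleton]
  have c14 : ∀ k, k % 2 = 0 → K1.coeff k = K4.coeff k := by
    intro k hk
    rw [hK1def, hK4def, coeff_kpoly, coeff_kpoly]
    have h4' : k % 4 = 0 ∨ k % 4 = 2 := by omega
    rcases h4' with h | h <;> simp [h, Finset.mem_insert, Finset.mem_singleton]
  have c23 : ∀ k, k % 2 = 0 → K2.coeff k = K3.coeff k := by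
    intro k hk
    rw [hK2def, hK3def, coeff_kpoly, coeff_kpoly]
    have h4' : k % 4 = 0 ∨ k % 4 = 2 := by omega
    rcases h4' with h | h <;> simp [h, Finset.mem_insert, Finset.mem_singleton]
  -- no K vanishes on the imaginary axis
  have evalK_ne : ∀ (q : ℝ[X]), Hurwitz q → ∀ ω : ℝ, (cm q).eval (I * ω) ≠ 0 := by
    intro q hq ω h
    have := hq (I * ω) (by rw [aeval_eq]; exact h)
    rw [show ((I : ℂ) * (ω : ℂ)).re = 0 by simp] at this
    exact lt_irrefl 0 this
  -- phase positivity for the K's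
  have phase : ∀ (q : ℝ[X]), Hurwitz q → q.coeff n ≠ 0 → ∀ ω : ℝ,
      0 < ph (cm q) (I * ω) := by
    intro q hq hc ω
    have hwre : ((I : ℂ) * (ω : ℂ)).re = 0 := by simp
    have hcmcoeff : (cm q).coeff n ≠ 0 := by
      rw [coeff_cm]; exact_mod_cast hc
    have hne : cm q ≠ 0 := fun h => hcmcoeff (by rw [h]; simp)
    have hroots : ∀ w : ℂ, (cm q).eval w = 0 → w.re < 0 := by
      intro w hw; exact hq w (by rw [aeval_eq]; exact hw)
    refine (phase_aux (cm q).natDegree (cm q) rfl hne hroots _ hwre).2 ?_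
    calc 1 ≤ n := hn
      _ ≤ (cm q).natDegree := Polynomial.le_natDegree_of_ne_zero hcmcoeff
  -- p has a nonnegative-frequency imaginary root
  have hpdeg : p.natDegree ≤ n := natDegree_le_of_mem hbeyond hp
  have hpk0 : ∀ k, n < k → p.coeff k = 0 := by
    intro k hk
    have := hp k
    obtain ⟨ha, hb⟩ := hbeyond k hk
    rw [Set.mem_Icc, ha, hb] at this
    linarith [this.1, this.2]
  obtain ⟨ω0, hω0, hev⟩ : ∃ ω : ℝ, 0 ≤ ω ∧ (cm p).eval (I * ω) = 0 := by
    rcases le_or_gt 0 z.im with him | him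
    · refine ⟨z.im, him, ?_⟩
      have hzeq : (I : ℂ) * (z.im : ℂ) = z := by
        apply Complex.ext <;> simp [hz]
      rw [hzeq, ← aeval_eq]; exact h0
    · refine ⟨-z.im, by linarith, ?_⟩
      have hzeq : (I : ℂ) * ((-z.im : ℝ) : ℂ) = (starRingEnd ℂ) z := by
        apply Complex.ext <;> simp [hz]
      rw [hzeq, ← aeval_eq, aeval_conj, h0, map_zero]
  -- coefficientwise comparisons
  have hcA1 : ∀ k, K1.coeff k * ((I : ℂ) ^ (k % 4)).re ≤ p.coeff k * ((I : ℂ) ^ (k % 4)).re := by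
    intro k
    by_cases hk : k ≤ n
    · have hm := hp k; rw [Set.mem_Icc] at hm
      have h4' : k % 4 = 0 ∨ k % 4 = 1 ∨ k % 4 = 2 ∨ k % 4 = 3 := by omega
      rw [hK1def, coeff_kpoly, if_pos hk]
      rcases h4' with h | h | h | h <;> rw [h] <;>
        simp [pow_succ, Complex.I_sq, Finset.mem_insert, Finset.mem_singleton] <;>
        linarith [hm.1, hm.2]
    · rw [hK1def, coeff_kpoly, if_neg hk, hpk0 k (not_le.1 hk), zero_mul]
  have hcA3 : ∀ k, p.coeff k * ((I : ℂ) ^ (k % 4)).re ≤ K3.coeff k * ((I : ℂ) ^ (k % 4)).re := by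
    intro k
    by_cases hk : k ≤ n
    · have hm := hp k; rw [Set.mem_Icc] at hm
      have h4' : k % 4 = 0 ∨ k % 4 = 1 ∨ k % 4 = 2 ∨ k % 4 = 3 := by omega
      rw [hK3def, coeff_kpoly, if_pos hk]
      rcases h4' with h | h | h | h <;> rw [h] <;>
        simp [pow_succ, Complex.I_sq, Finset.mem_insert, Finset.mem_singleton] <;>
        linarith [hm.1, hm.2]
    · rw [hK3def, coeff_kpoly, if_neg hk, hpk0 k (not_le.1 hk), zero_mul]
  have hcB1 : ∀ k, K1.coeff k * ((I : ℂ) ^ (k % 4)).im ≤ p.coeff k * ((I : ℂ) ^ (k % 4)).im := by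
    intro k
    by_cases hk : k ≤ n
    · have hm := hp k; rw [Set.mem_Icc] at hm
      have h4' : k % 4 = 0 ∨ k % 4 = 1 ∨ k % 4 = 2 ∨ k % 4 = 3 := by omega
      rw [hK1def, coeff_kpoly, if_pos hk]
      rcases h4' with h | h | h | h <;> rw [h] <;>
        simp [pow_succ, Complex.I_sq, Finset.mem_insert, Finset.mem_singleton] <;>
        linarith [hm.1, hm.2]
    · rw [hK1def, coeff_kpoly, if_neg hk, hpk0 k (not_le.1 hk), zero_mul]
  have hcB2 : ∀ k, p.coeff k * ((I : ℂ) ^ (k % 4)).im ≤ K2.coeff k * ((I : ℂ) ^ (k % 4)).im := by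
    intro k
    by_cases hk : k ≤ n
    · have hm := hp k; rw [Set.mem_Icc] at hm
      have h4' : k % 4 = 0 ∨ k % 4 = 1 ∨ k % 4 = 2 ∨ k % 4 = 3 := by omega
      rw [hK2def, coeff_kpoly, if_pos hk]
      rcases h4' with h | h | h | h <;> rw [h] <;>
        simp [pow_succ, Complex.I_sq, Finset.mem_insert, Finset.mem_singleton] <;>
        linarith [hm.1, hm.2]
    · rw [hK2def, coeff_kpoly, if_neg hk, hpk0 k (not_le.1 hk), zero_mul]
  -- the value rectangle contains 0 at ω0
  have hre0 : ((cm p).eval (I * ω0)).re = 0 := by rw [hev]; exact Complex.zero_re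
  have him0 : ((cm p).eval (I * ω0)).im = 0 := by rw [hev]; exact Complex.zero_im
  set W : Set ℝ := {ω | 0 ≤ ω ∧ ((cm K1).eval (I * ω)).re ≤ 0 ∧
      0 ≤ ((cm K3).eval (I * ω)).re ∧ ((cm K1).eval (I * ω)).im ≤ 0 ∧
      0 ≤ ((cm K2).eval (I * ω)).im} with hWdef
  have hω0W : ω0 ∈ W := by
    refine ⟨hω0, ?_, ?_, ?_, ?_⟩
    · have := cmp_re (hKdegle {2,3}) hpdeg ω0 hcA1 hω0
      rw [hre0] at this; exact this
    · have := cmp_re hpdeg (hKdegle {0,3}) ω0 hcA3 hω0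
      rw [hre0] at this; exact this
    · have := cmp_im (hKdegle {2,3}) hpdeg ω0 hcB1 hω0
      rw [him0] at this; exact this
    · have := cmp_im hpdeg (hKdegle {0,1}) ω0 hcB2 hω0
      rw [him0] at this; exact this
  -- the infimum of W
  have hWbdd : BddBelow W := ⟨0, fun x hx => hx.1⟩
  have contEval : ∀ q : ℝ[X], Continuous fun ω : ℝ => (cm q).eval (I * ω) := by
    intro q
    exact (Polynomial.continuous (cm q)).comp (continuous_const.mul Complex.continuous_ofReal)
  have contRe : ∀ q : ℝ[X], Continuous fun ω : ℝ => ((cm q).eval (I * ω)).re :=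
    fun q => Complex.continuous_re.comp (contEval q)
  have contIm : ∀ q : ℝ[X], Continuous fun ω : ℝ => ((cm q).eval (I * ω)).im :=
    fun q => Complex.continuous_im.comp (contEval q)
  have hWclosed : IsClosed W := by
    have hWeq : W = {ω : ℝ | 0 ≤ ω} ∩ ({ω : ℝ | ((cm K1).eval (I * ω)).re ≤ 0} ∩
        ({ω : ℝ | 0 ≤ ((cm K3).eval (I * ω)).re} ∩
        ({ω : ℝ | ((cm K1).eval (I * ω)).im ≤ 0} ∩
         {ω : ℝ | 0 ≤ ((cm K2).eval (I * ω)).im}))) := by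
      ext x
      simp only [hWdef, Set.mem_setOf_eq, Set.mem_inter_iff, and_assoc]
    rw [hWeq]
    exact (isClosed_le continuous_const continuous_id).inter
      ((isClosed_le (contRe K1) continuous_const).inter
      ((isClosed_le continuous_const (contRe K3)).inter
      ((isClosed_le (contIm K1) continuous_const).inter
      (isClosed_le continuous_const (contIm K2)))))
  have hWne : W.Nonempty := ⟨ω0, hω0W⟩
  set ω' := sInf W with hω'def
  have hω'W : ω' ∈ W := hWclosed.csInf_mem hWne hWbdd
  obtain ⟨hω'0, hA1le, hA3ge, hB1le, hB2ge⟩ := hω'W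
  have hB1zero : ((cm K1).eval (I * ((0 : ℝ) : ℂ))).im = 0 := by
    rw [show (I : ℂ) * ((0 : ℝ) : ℂ) = 0 by norm_num, ← Polynomial.coeff_zero_eq_eval_zero,
      coeff_cm]
    exact Complex.ofReal_im _
  have hedge : ((cm K1).eval (I * ω')).re = 0 ∨ 0 = ((cm K3).eval (I * ω')).re ∨
      ((cm K1).eval (I * ω')).im = 0 ∨ 0 = ((cm K2).eval (I * ω')).im := by
    by_contra hc
    push_neg at hc
    obtain ⟨e1, e2, e3, e4⟩ := hc
    have sA1 : ((cm K1).eval (I * ω')).re < 0 := lt_of_le_of_ne hA1le e1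
    have sA3 : 0 < ((cm K3).eval (I * ω')).re := lt_of_le_of_ne hA3ge e2
    have sB1 : ((cm K1).eval (I * ω')).im < 0 := lt_of_le_of_ne hB1le e3
    have sB2 : 0 < ((cm K2).eval (I * ω')).im := lt_of_le_of_ne hB2ge e4
    have hω'pos : 0 < ω' := by
      rcases lt_or_eq_of_le hω'0 with h | h
      · exact h
      · exfalso
        rw [← h, hB1zero] at sB1
        exact lt_irrefl 0 sB1
    set g : ℝ → ℝ := fun ω => max (((cm K1).eval (I * ω)).re)
      (max (-((cm K3).eval (I * ω)).re)
      (max (((cm K1).eval (I * ω)).im) (-((cm K2).eval (I * ω)).im))) with hg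
    have hgc : Continuous g := ((contRe K1).max (((contRe K3).neg).max
      ((contIm K1).max ((contIm K2).neg))))
    have hgω' : g ω' < 0 := by
      rw [hg]
      exact max_lt sA1 (max_lt (by linarith) (max_lt sB1 (by linarith)))
    obtain ⟨δ, hδpos, hδ⟩ :=
      Metric.continuousAt_iff.1 (hgc.continuousAt (x := ω')) (-(g ω')) (by linarith)
    set y := ω' - min δ ω' / 2 with hy
    have hminpos : 0 < min δ ω' := lt_min hδpos hω'pos
    have hylt : y < ω' := by rw [hy]; linarith
    have hy0 : 0 ≤ y := by
      have := min_le_right δ ω'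
      rw [hy]; linarith
    have hydist : dist y ω' < δ := by
      rw [Real.dist_eq, hy, show ω' - min δ ω' / 2 - ω' = -(min δ ω' / 2) by ring, abs_neg,
        _root_.abs_of_nonneg (by linarith)]
      have := min_le_left δ ω'
      linarith
    have hgy : g y < 0 := by
      have h' := hδ hydist
      rw [Real.dist_eq] at h'
      have h'' := (abs_lt.1 h').2
      linarith
    have hyW : y ∈ W := by
      simp only [hg, max_lt_iff] at hgy
      exact ⟨hy0, le_of_lt hgy.1, by linarith [hgy.2.1], le_of_lt hgy.2.2.1,
        by linarith [hgy.2.2.2]⟩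
    have hcon := csInf_le hWbdd hyW
    rw [← hω'def] at hcon
    linarith
  have hs13 := share_odd c13 ω'
  have hs24 := share_odd c24 ω'
  have hs14 := share_even c14 ω'
  have hs23 := share_even c23 ω'
  rcases hedge with hE | hE | hE | hE
  · -- left edge: Re K1 = Re K4 = 0
    have hreK4 : ((cm K4).eval (I * ω')).re = 0 := by rw [← hs14.1]; exact hE
    have himK4 : ((cm K4).eval (I * ω')).im = ((cm K2).eval (I * ω')).im := hs24.1.symm
    have hb1lt : ((cm K1).eval (I * ω')).im < 0 := by
      rcases lt_or_eq_of_le hB1le with h | h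
      · exact h
      · exact absurd (Complex.ext (by simp [hE]) (by simp [h])) (evalK_ne K1 h1 ω')
    have hb4gt : 0 < ((cm K4).eval (I * ω')).im := by
      rcases lt_or_eq_of_le hB2ge with h | h
      · rw [himK4]; exact h
      · exact absurd (Complex.ext (by simp [hreK4]) (by simp [himK4, ← h]))
          (evalK_ne K4 h4 ω')
    have hph1 := phase K1 h1 (hKcoeffn {2, 3}) ω'
    rw [ph_of_imag _ _ (((cm K1).eval (I * ω')).im)
      (Complex.ext (by simp [hE]) (by simp))] at hph1
    have hph4 := phase K4 h4 (hKcoeffn {1, 2}) ω'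
    rw [ph_of_imag _ _ (((cm K4).eval (I * ω')).im)
      (Complex.ext (by simp [hreK4]) (by simp))] at hph4
    have hd1 : ((Polynomial.derivative (cm K1)).eval (I * ω')).im < 0 := by
      rcases mul_pos_iff.1 hph1 with ⟨ha, hb⟩ | ⟨ha, hb⟩
      · linarith
      · exact hb
    have hd4 : 0 < ((Polynomial.derivative (cm K4)).eval (I * ω')).im := by
      rcases mul_pos_iff.1 hph4 with ⟨ha, hb⟩ | ⟨ha, hb⟩
      · exact hb
      · linarith
    rw [hs14.2] at hd1
    linarith
  · -- right edge: Re K3 = Re K2 = 0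
    have hreK3 : ((cm K3).eval (I * ω')).re = 0 := hE.symm
    have hreK2 : ((cm K2).eval (I * ω')).re = 0 := by rw [hs23.1]; exact hreK3
    have himK3 : ((cm K3).eval (I * ω')).im = ((cm K1).eval (I * ω')).im := hs13.1.symm
    have hb3lt : ((cm K3).eval (I * ω')).im < 0 := by
      rcases lt_or_eq_of_le (himK3 ▸ hB1le) with h | h
      · exact h
      · exact absurd (Complex.ext (by simp [hreK3]) (by simp [h])) (evalK_ne K3 h3 ω')
    have hb2gt : 0 < ((cm K2).eval (I * ω')).im := by
      rcases lt_or_eq_of_le hB2ge with h | h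
      · exact h
      · exact absurd (Complex.ext (by simp [hreK2]) (by simp [← h])) (evalK_ne K2 h2 ω')
    have hph3 := phase K3 h3 (hKcoeffn {0, 3}) ω'
    rw [ph_of_imag _ _ (((cm K3).eval (I * ω')).im)
      (Complex.ext (by simp [hreK3]) (by simp))] at hph3
    have hph2 := phase K2 h2 (hKcoeffn {0, 1}) ω'
    rw [ph_of_imag _ _ (((cm K2).eval (I * ω')).im)
      (Complex.ext (by simp [hreK2]) (by simp))] at hph2
    have hd3 : ((Polynomial.derivative (cm K3)).eval (I * ω')).im < 0 := by
      rcases mul_pos_iff.1 hph3 with ⟨ha, hb⟩ | ⟨ha, hb⟩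
      · linarith
      · exact hb
    have hd2 : 0 < ((Polynomial.derivative (cm K2)).eval (I * ω')).im := by
      rcases mul_pos_iff.1 hph2 with ⟨ha, hb⟩ | ⟨ha, hb⟩
      · exact hb
      · linarith
    rw [hs23.2] at hd2
    linarith
  · -- bottom edge: Im K1 = Im K3 = 0
    have himK3 : ((cm K3).eval (I * ω')).im = 0 := by rw [← hs13.1]; exact hE
    have ha1lt : ((cm K1).eval (I * ω')).re < 0 := by
      rcases lt_or_eq_of_le hA1le with h | h
      · exact h
      · exact absurd (Complex.ext (by simp [h]) (by simp [hE])) (evalK_ne K1 h1 ω')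
    have ha3gt : 0 < ((cm K3).eval (I * ω')).re := by
      rcases lt_or_eq_of_le hA3ge with h | h
      · exact h
      · exact absurd (Complex.ext (by simp [← h]) (by simp [himK3])) (evalK_ne K3 h3 ω')
    have hph1 := phase K1 h1 (hKcoeffn {2, 3}) ω'
    rw [ph_of_real _ _ (((cm K1).eval (I * ω')).re)
      (Complex.ext (by simp) (by simp [hE]))] at hph1
    have hph3 := phase K3 h3 (hKcoeffn {0, 3}) ω'
    rw [ph_of_real _ _ (((cm K3).eval (I * ω')).re)
      (Complex.ext (by simp) (by simp [himK3]))] at hph3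
    have hd1 : ((Polynomial.derivative (cm K1)).eval (I * ω')).re < 0 := by
      rcases mul_pos_iff.1 hph1 with ⟨ha, hb⟩ | ⟨ha, hb⟩
      · linarith
      · exact hb
    have hd3 : 0 < ((Polynomial.derivative (cm K3)).eval (I * ω')).re := by
      rcases mul_pos_iff.1 hph3 with ⟨ha, hb⟩ | ⟨ha, hb⟩
      · exact hb
      · linarith
    rw [hs13.2] at hd1
    linarith
  · -- top edge: Im K2 = Im K4 = 0
    have himK2 : ((cm K2).eval (I * ω')).im = 0 := hE.symm
    have himK4 : ((cm K4).eval (I * ω')).im = 0 := by rw [← hs24.1]; exact himK2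
    have hreK2eq : ((cm K2).eval (I * ω')).re = ((cm K3).eval (I * ω')).re := hs23.1
    have hreK4eq : ((cm K4).eval (I * ω')).re = ((cm K1).eval (I * ω')).re := hs14.1.symm
    have ha2gt : 0 < ((cm K2).eval (I * ω')).re := by
      rcases lt_or_eq_of_le (hreK2eq ▸ hA3ge) with h | h
      · exact h
      · exact absurd (Complex.ext (by simp [← h]) (by simp [himK2])) (evalK_ne K2 h2 ω')
    have ha4lt : ((cm K4).eval (I * ω')).re < 0 := by
      rcases lt_or_eq_of_le (hreK4eq ▸ hA1le) with h | h
      · exact h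
      · exact absurd (Complex.ext (by simp [h]) (by simp [himK4])) (evalK_ne K4 h4 ω')
    have hph2 := phase K2 h2 (hKcoeffn {0, 1}) ω'
    rw [ph_of_real _ _ (((cm K2).eval (I * ω')).re)
      (Complex.ext (by simp) (by simp [himK2]))] at hph2
    have hph4 := phase K4 h4 (hKcoeffn {1, 2}) ω'
    rw [ph_of_real _ _ (((cm K4).eval (I * ω')).re)
      (Complex.ext (by simp) (by simp [himK4]))] at hph4
    have hd2 : 0 < ((Polynomial.derivative (cm K2)).eval (I * ω')).re := by
      rcases mul_pos_iff.1 hph2 with ⟨ha, hb⟩ | ⟨ha, hb⟩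
      · exact hb
      · linarith
    have hd4 : ((Polynomial.derivative (cm K4)).eval (I * ω')).re < 0 := by
      rcases mul_pos_iff.1 hph4 with ⟨ha, hb⟩ | ⟨ha, hb⟩
      · linarith
      · exact hb
    rw [hs24.2] at hd2
    linarith

end KHaux
namespace KHaux
open Complex

lemma coeffn_lower {n : ℕ} {lo hi : ℕ → ℝ} (hle : ∀ i, lo i ≤ hi i)
    (hlead : (0 : ℝ) ∉ Set.Icc (lo n) (hi n)) {q : ℝ[X]} (hq : q ∈ intervalFamily lo hi) :
    min |lo n| |hi n| ≤ |q.coeff n| := by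
  have hmem := hq n; rw [Set.mem_Icc] at hmem
  by_cases h : 0 < lo n
  · rw [abs_of_pos (lt_of_lt_of_le h hmem.1)]
    calc min |lo n| |hi n| ≤ |lo n| := min_le_left _ _
      _ = lo n := abs_of_pos h
      _ ≤ _ := hmem.1
  · have hlo0 : lo n ≤ 0 := not_lt.1 h
    have hhineg : hi n < 0 := by
      by_contra hh
      exact hlead (Set.mem_Icc.2 ⟨hlo0, not_lt.1 hh⟩)
    have hcneg : q.coeff n < 0 := lt_of_le_of_lt hmem.2 hhineg
    rw [abs_of_neg hcneg]
    calc min |lo n| |hi n| ≤ |hi n| := min_le_right _ _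
      _ = -hi n := abs_of_neg hhineg
      _ ≤ -q.coeff n := by linarith

lemma root_bound {n : ℕ} {lo hi : ℕ → ℝ} (hle : ∀ i, lo i ≤ hi i)
    (hbeyond : ∀ i, n < i → lo i = 0 ∧ hi i = 0)
    (hlead : (0 : ℝ) ∉ Set.Icc (lo n) (hi n)) (hn : 1 ≤ n)
    {q : ℝ[X]} (hq : q ∈ intervalFamily lo hi) {z : ℂ} (hz : (cm q).eval z = 0) :
    ‖z‖ ≤ 1 + (∑ k ∈ Finset.range n, max |lo k| |hi k|) / min |lo n| |hi n| := by
  set m := min |lo n| |hi n| with hm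
  set S := ∑ k ∈ Finset.range n, max |lo k| |hi k| with hS
  have hlon : lo n ≠ 0 := fun h => hlead (Set.mem_Icc.2 ⟨le_of_eq h, h ▸ hle n⟩)
  have hhin : hi n ≠ 0 := fun h => hlead (Set.mem_Icc.2 ⟨h ▸ hle n, le_of_eq h.symm⟩)
  have hmpos : 0 < m := lt_min (abs_pos.2 hlon) (abs_pos.2 hhin)
  have hSnn : 0 ≤ S :=
    Finset.sum_nonneg fun k _ => le_trans (abs_nonneg (lo k)) (le_max_left _ _)
  have hcn : m ≤ |q.coeff n| := coeffn_lower hle hlead hq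
  have hck : ∀ k, |q.coeff k| ≤ max |lo k| |hi k| := by
    intro k
    have hmem := hq k; rw [Set.mem_Icc] at hmem
    rw [abs_le]
    constructor
    · linarith [neg_abs_le (lo k), le_max_left |lo k| |hi k|, hmem.1]
    · linarith [le_abs_self (hi k), le_max_right |lo k| |hi k|, hmem.2]
  by_cases hz1 : ‖z‖ ≤ 1
  · have : 0 ≤ S / m := div_nonneg hSnn (le_of_lt hmpos)
    linarith
  · push_neg at hz1
    have hdeg : q.natDegree < n + 1 := Nat.lt_succ_of_le (natDegree_le_of_mem hbeyond hq)
    have hdeg' : (cm q).natDegree < n + 1 :=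
      lt_of_le_of_lt (Polynomial.natDegree_map_le) hdeg
    have hsum : ∑ k ∈ Finset.range (n + 1), (cm q).coeff k * z ^ k = 0 := by
      rw [show cm q = q.map (algebraMap ℝ ℂ) from rfl] at hdeg' ⊢
      rw [← Polynomial.eval_eq_sum_range' hdeg']
      exact hz
    rw [Finset.sum_range_succ] at hsum
    have heq : (cm q).coeff n * z ^ n = -∑ k ∈ Finset.range n, (cm q).coeff k * z ^ k := by
      linear_combination hsum
    have hnorm : |q.coeff n| * ‖z‖ ^ n ≤ S * ‖z‖ ^ (n - 1) := by
      have h1 : ‖(cm q).coeff n * z ^ n‖ = |q.coeff n| * ‖z‖ ^ n := by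
        rw [norm_mul, norm_pow, coeff_cm, Complex.norm_real, Real.norm_eq_abs]
      have h2 : ‖∑ k ∈ Finset.range n, (cm q).coeff k * z ^ k‖ ≤ S * ‖z‖ ^ (n - 1) := by
        refine le_trans (norm_sum_le _ _) ?_
        rw [hS, Finset.sum_mul]
        refine Finset.sum_le_sum fun k hk => ?_
        rw [norm_mul, norm_pow, coeff_cm, Complex.norm_real, Real.norm_eq_abs]
        have hkn : k ≤ n - 1 := by
          have := Finset.mem_range.1 hk; omega
        have hzp : ‖z‖ ^ k ≤ ‖z‖ ^ (n - 1) := pow_le_pow_right₀ (le_of_lt hz1) hkn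
        have h0k : 0 ≤ ‖z‖ ^ k := pow_nonneg (norm_nonneg z) k
        have := hck k
        nlinarith [abs_nonneg (q.coeff k)]
      calc |q.coeff n| * ‖z‖ ^ n = ‖(cm q).coeff n * z ^ n‖ := h1.symm
        _ = ‖∑ k ∈ Finset.range n, (cm q).coeff k * z ^ k‖ := by rw [heq, norm_neg]
        _ ≤ S * ‖z‖ ^ (n - 1) := h2
    have hzn : ‖z‖ ^ n = ‖z‖ ^ (n - 1) * ‖z‖ := by
      conv_lhs => rw [show n = n - 1 + 1 by omega]
      rw [pow_succ]
    have hpow : 0 < ‖z‖ ^ (n - 1) := pow_pos (lt_trans one_pos hz1) _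
    have hmn : m * ‖z‖ ≤ S := by
      have step : m * ‖z‖ * ‖z‖ ^ (n - 1) ≤ S * ‖z‖ ^ (n - 1) := by
        calc m * ‖z‖ * ‖z‖ ^ (n - 1) = m * ‖z‖ ^ n := by rw [hzn]; ring
          _ ≤ |q.coeff n| * ‖z‖ ^ n := by nlinarith [pow_nonneg (norm_nonneg z) n]
          _ ≤ S * ‖z‖ ^ (n - 1) := hnorm
      exact le_of_mul_le_mul_right step hpow
    have hfin : ‖z‖ ≤ S / m := (le_div_iff₀ hmpos).2 (by linarith)
    linarith

lemma prod_norm_ge {ε : ℝ} (hε : 0 ≤ ε) (s : Multiset ℂ) (z : ℂ)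
    (h : ∀ w ∈ s, ε ≤ ‖z - w‖) :
    ε ^ Multiset.card s ≤ ‖(s.map (fun w => z - w)).prod‖ := by
  induction s using Multiset.induction with
  | empty => simp
  | cons a t ih =>
    rw [Multiset.map_cons, Multiset.prod_cons, Multiset.card_cons, norm_mul, pow_succ]
    have h1 : ε ≤ ‖z - a‖ := h a (Multiset.mem_cons_self a t)
    have h2 := ih fun w hw => h w (Multiset.mem_cons_of_mem hw)
    have h3 : 0 ≤ ε ^ Multiset.card t := pow_nonneg hε _
    calc ε ^ Multiset.card t * ε
        ≤ ‖(Multiset.map (fun w => z - w) t).prod‖ * ‖z - a‖ :=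
          mul_le_mul h2 h1 hε (norm_nonneg _)
      _ = ‖z - a‖ * ‖(Multiset.map (fun w => z - w) t).prod‖ := mul_comm _ _

lemma exists_root_near {q : ℂ[X]} {z : ℂ} {ε : ℝ} (hε : 0 < ε) (hq : q ≠ 0)
    (h : ‖q.eval z‖ < ‖q.leadingCoeff‖ * ε ^ q.natDegree) :
    ∃ w : ℂ, q.eval w = 0 ∧ ‖z - w‖ < ε := by
  by_contra hc
  push_neg at hc
  have hroots : ∀ w ∈ q.roots, ε ≤ ‖z - w‖ := by
    intro w hw
    exact hc w ((Polynomial.mem_roots'.1 hw).2)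
  have hcard : Multiset.card q.roots = q.natDegree :=
    IsAlgClosed.card_roots_eq_natDegree
  have hfact := Polynomial.C_leadingCoeff_mul_prod_multiset_X_sub_C hcard
  have heval : q.eval z = q.leadingCoeff * (q.roots.map (fun w => z - w)).prod := by
    conv_lhs => rw [← hfact]
    rw [Polynomial.eval_mul, Polynomial.eval_C, Polynomial.eval_multiset_prod,
      Multiset.map_map]
    have hmc : Multiset.map (Polynomial.eval z ∘ fun a => Polynomial.X - Polynomial.C a) q.roots
        = Multiset.map (fun w => z - w) q.roots :=
      Multiset.map_congr rfl fun w _ => by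
        simp [Function.comp_apply, Polynomial.eval_sub]
    rw [hmc]
  have hge : ‖q.leadingCoeff‖ * ε ^ q.natDegree ≤ ‖q.eval z‖ := by
    rw [heval, norm_mul, ← hcard]
    exact mul_le_mul_of_nonneg_left (prod_norm_ge (le_of_lt hε) q.roots z hroots)
      (norm_nonneg _)
  linarith

end KHaux
namespace KHaux
open Complex

lemma hurwitz_of_family (n : ℕ) (lo hi : ℕ → ℝ)
    (hle : ∀ i, lo i ≤ hi i)
    (hbeyond : ∀ i, n < i → lo i = 0 ∧ hi i = 0)
    (hlead : (0 : ℝ) ∉ Set.Icc (lo n) (hi n)) (hn : 1 ≤ n)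
    (hK1 : Hurwitz (kpoly n lo hi {2, 3}))
    (hnoim : ∀ q ∈ intervalFamily lo hi, ∀ z : ℂ, z.re = 0 → Polynomial.aeval z q ≠ 0)
    {p : ℝ[X]} (hp : p ∈ intervalFamily lo hi) : Hurwitz p := by
  classical
  have hlon : lo n ≠ 0 := fun h => hlead (Set.mem_Icc.2 ⟨le_of_eq h, h ▸ hle n⟩)
  have hhin : hi n ≠ 0 := fun h => hlead (Set.mem_Icc.2 ⟨h ▸ hle n, le_of_eq h.symm⟩)
  set m := min |lo n| |hi n| with hm
  have hmpos : 0 < m := lt_min (abs_pos.2 hlon) (abs_pos.2 hhin)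
  set K1 := kpoly n lo hi {2, 3} with hK1def
  have hK1mem : K1 ∈ intervalFamily lo hi := kpoly_mem n lo hi hle hbeyond _
  set pt : ℝ → ℝ[X] := fun t => Polynomial.C (1 - t) * K1 + Polynomial.C t * p with hpt
  have hptmem : ∀ t : ℝ, t ∈ Set.Icc (0 : ℝ) 1 → pt t ∈ intervalFamily lo hi := by
    intro t ht k
    have h1 := hK1mem k
    have h2 := hp k
    rw [Set.mem_Icc] at h1 h2 ⊢
    simp only [hpt, Polynomial.coeff_add, Polynomial.coeff_C_mul]
    obtain ⟨ht0, ht1⟩ := ht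
    constructor
    · nlinarith [h1.1, h2.1]
    · nlinarith [h1.2, h2.2]
  have haeval : ∀ (t : ℝ) (z : ℂ), Polynomial.aeval z (pt t)
      = ((1 - t : ℝ) : ℂ) * Polynomial.aeval z K1 + ((t : ℝ) : ℂ) * Polynomial.aeval z p := by
    intro t z
    simp only [hpt, map_add, map_mul, Polynomial.aeval_C, Complex.coe_algebraMap]
  set M := 1 + (∑ k ∈ Finset.range n, max |lo k| |hi k|) / m with hM
  have hM1 : 1 ≤ M := by
    have hSnn : 0 ≤ ∑ k ∈ Finset.range n, max |lo k| |hi k| :=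
      Finset.sum_nonneg fun k _ => le_trans (abs_nonneg (lo k)) (le_max_left _ _)
    have h0 : 0 ≤ (∑ k ∈ Finset.range n, max |lo k| |hi k|) / m :=
      div_nonneg hSnn (le_of_lt hmpos)
    rw [hM]
    linarith
  set B : Set ℂ := {w : ℂ | ‖w‖ ≤ M ∧ 0 ≤ w.re} with hB
  have hBcompact : IsCompact B := by
    have hBeq : B = Metric.closedBall 0 M ∩ {w : ℂ | 0 ≤ w.re} := by
      ext w
      simp [hB, Metric.mem_closedBall, dist_zero_right]
    rw [hBeq]
    exact (isCompact_closedBall 0 M).inter_right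
      (isClosed_le continuous_const Complex.continuous_re)
  have hBne : B.Nonempty := ⟨0, by simp [hB]; linarith⟩
  have hrootB : ∀ t ∈ Set.Icc (0 : ℝ) 1, ∀ z : ℂ,
      Polynomial.aeval z (pt t) = 0 → 0 ≤ z.re → z ∈ B := by
    intro t ht z hz hre
    refine ⟨?_, hre⟩
    rw [hM, hm]
    exact root_bound hle hbeyond hlead hn (hptmem t ht) (by rw [← aeval_eq]; exact hz)
  haveI : PreconnectedSpace (Set.Icc (0 : ℝ) 1) := Subtype.preconnectedSpace isPreconnected_Icc
  set S : Set (Set.Icc (0 : ℝ) 1) := {t | Hurwitz (pt ↑t)} with hSdef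
  have hS0 : (⟨0, by norm_num⟩ : Set.Icc (0 : ℝ) 1) ∈ S := by
    show Hurwitz (pt 0)
    have h0 : pt 0 = K1 := by simp [hpt]
    rw [h0]; exact hK1
  have hopen : IsOpen S := by
    rw [Metric.isOpen_iff]
    intro t htS
    have hcont1 : ContinuousOn (fun w : ℂ => ‖Polynomial.aeval w (pt ↑t)‖) B :=
      ((Polynomial.continuous_aeval (pt (↑t : ℝ))).norm).continuousOn
    obtain ⟨w0, hw0B, hw0min⟩ := hBcompact.exists_isMinOn hBne hcont1
    set δ := ‖Polynomial.aeval w0 (pt ↑t)‖ with hδ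
    have hδpos : 0 < δ := by
      rw [hδ, norm_pos_iff]
      intro h
      exact absurd (htS w0 h) (not_lt.2 hw0B.2)
    have hcont2 : ContinuousOn (fun w : ℂ => ‖Polynomial.aeval w (p - K1)‖) B :=
      ((Polynomial.continuous_aeval (p - K1)).norm).continuousOn
    obtain ⟨w1, hw1B, hw1max⟩ := hBcompact.exists_isMaxOn hBne hcont2
    set Cm := ‖Polynomial.aeval w1 (p - K1)‖ with hCm
    have hCmnn : 0 ≤ Cm := norm_nonneg _
    refine ⟨δ / (Cm + 1), by positivity, ?_⟩
    intro s hst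
    show Hurwitz (pt ↑s)
    intro z hz
    by_contra hre
    push_neg at hre
    have hzB : z ∈ B := hrootB ↑s s.2 z hz hre
    have hdiff : Polynomial.aeval z (pt ↑t)
        = (((↑t : ℝ) - (↑s : ℝ) : ℝ) : ℂ) *
            (Polynomial.aeval z p - Polynomial.aeval z K1) := by
      have h1 := haeval ↑t z
      have h2 := haeval ↑s z
      rw [hz] at h2
      rw [h1]
      have h3 : ((1 - (↑t : ℝ) : ℝ) : ℂ) * Polynomial.aeval z K1
            + (((↑t : ℝ) : ℝ) : ℂ) * Polynomial.aeval z p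
          = (((↑t : ℝ) - (↑s : ℝ) : ℝ) : ℂ) *
              (Polynomial.aeval z p - Polynomial.aeval z K1)
            + (((1 - (↑s : ℝ) : ℝ) : ℂ) * Polynomial.aeval z K1
              + (((↑s : ℝ) : ℝ) : ℂ) * Polynomial.aeval z p) := by
        push_cast
        ring
      rw [h3, ← h2, add_zero]
    have hmin : δ ≤ ‖Polynomial.aeval z (pt ↑t)‖ := isMinOn_iff.1 hw0min z hzB
    have hmax : ‖Polynomial.aeval z (p - K1)‖ ≤ Cm := isMaxOn_iff.1 hw1max z hzB
    have hdist : |(↑s : ℝ) - (↑t : ℝ)| < δ / (Cm + 1) := by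
      have := Metric.mem_ball.1 hst
      rw [Subtype.dist_eq, Real.dist_eq] at this
      exact this
    have hnorm : ‖Polynomial.aeval z (pt ↑t)‖
        = |(↑s : ℝ) - (↑t : ℝ)| * ‖Polynomial.aeval z (p - K1)‖ := by
      rw [hdiff, norm_mul, Complex.norm_real, Real.norm_eq_abs, map_sub, abs_sub_comm]
    have hlt : |(↑s : ℝ) - (↑t : ℝ)| * ‖Polynomial.aeval z (p - K1)‖
        < δ / (Cm + 1) * (Cm + 1) := by
      apply mul_lt_mul' (le_of_lt hdist) _ (norm_nonneg _) (by positivity)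
      calc ‖Polynomial.aeval z (p - K1)‖ ≤ Cm := hmax
        _ < Cm + 1 := by linarith
    rw [div_mul_cancel₀ _ (by positivity : (Cm + 1 : ℝ) ≠ 0)] at hlt
    rw [hnorm] at hmin
    linarith
  have hclosed : IsClosed S := by
    rw [← closure_subset_iff_isClosed]
    intro t ht
    show Hurwitz (pt ↑t)
    intro z hz
    by_contra hre
    push_neg at hre
    have hzre : z.re ≠ 0 := fun h => hnoim (pt ↑t) (hptmem ↑t t.2) z h hz
    have hzpos : 0 < z.re := lt_of_le_of_ne hre (Ne.symm hzre)
    set θ := m * z.re ^ n with hθ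
    have hθpos : 0 < θ := mul_pos hmpos (pow_pos hzpos n)
    have hcont : Continuous fun s : Set.Icc (0 : ℝ) 1 => ‖Polynomial.aeval z (pt ↑s)‖ := by
      have heq : (fun s : Set.Icc (0 : ℝ) 1 => Polynomial.aeval z (pt ↑s))
          = fun s : Set.Icc (0 : ℝ) 1 =>
              ((1 - (↑s : ℝ) : ℝ) : ℂ) * Polynomial.aeval z K1
                + (((↑s : ℝ) : ℝ) : ℂ) * Polynomial.aeval z p :=
        funext fun s => haeval ↑s z
      refine Continuous.norm ?_
      rw [heq]
      exact ((Complex.continuous_ofReal.comp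
          (continuous_const.sub continuous_subtype_val)).mul continuous_const).add
        ((Complex.continuous_ofReal.comp continuous_subtype_val).mul continuous_const)
    set U : Set (Set.Icc (0 : ℝ) 1) := {s | ‖Polynomial.aeval z (pt ↑s)‖ < θ} with hU
    have hUopen : IsOpen U := isOpen_lt hcont continuous_const
    have htU : t ∈ U := by
      show ‖Polynomial.aeval z (pt ↑t)‖ < θ
      rw [hz]
      simpa using hθpos
    obtain ⟨s, hsU, hsS⟩ := mem_closure_iff.1 ht U hUopen htU
    set q : ℂ[X] := cm (pt ↑s) with hq
    have hqmem := hptmem ↑s s.2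
    have hqcoeffn : (pt ↑s).coeff n ≠ 0 := by
      have hmem := hqmem n; rw [Set.mem_Icc] at hmem
      intro h
      exact hlead (Set.mem_Icc.2 ⟨h ▸ hmem.1, h ▸ hmem.2⟩)
    have hqcoeffC : q.coeff n ≠ 0 := by
      rw [hq, coeff_cm]
      exact_mod_cast hqcoeffn
    have hqne : q ≠ 0 := fun h => hqcoeffC (by rw [h]; simp)
    have hqdeg : q.natDegree = n := by
      have hle' : q.natDegree ≤ n :=
        le_trans Polynomial.natDegree_map_le (natDegree_le_of_mem hbeyond hqmem)
      have hge : n ≤ q.natDegree := Polynomial.le_natDegree_of_ne_zero hqcoeffC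
      omega
    have hlc : m ≤ ‖q.leadingCoeff‖ := by
      rw [Polynomial.leadingCoeff, hqdeg, hq, coeff_cm, Complex.norm_real, Real.norm_eq_abs]
      exact coeffn_lower hle hlead hqmem
    have hevals : ‖q.eval z‖ < ‖q.leadingCoeff‖ * z.re ^ q.natDegree := by
      have h1 : ‖q.eval z‖ < θ := by
        rw [hq, ← aeval_eq]
        exact hsU
      have h2 : θ ≤ ‖q.leadingCoeff‖ * z.re ^ q.natDegree := by
        rw [hqdeg, hθ]
        exact mul_le_mul_of_nonneg_right hlc (le_of_lt (pow_pos hzpos n))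
      linarith
    obtain ⟨w, hw0, hwnear⟩ := exists_root_near hzpos hqne hevals
    have hwre : 0 < w.re := by
      have h3 : |z.re - w.re| < z.re := by
        calc |z.re - w.re| = |(z - w).re| := by rw [Complex.sub_re]
          _ ≤ ‖z - w‖ := Complex.abs_re_le_norm _
          _ < z.re := hwnear
      have := (abs_lt.1 h3).2
      linarith
    have := hsS w (by rw [aeval_eq]; exact hw0)
    linarith
  have hSuniv : S = Set.univ := IsClopen.eq_univ ⟨hclosed, hopen⟩ ⟨_, hS0⟩
  have h1S : (⟨1, by norm_num⟩ : Set.Icc (0 : ℝ) 1) ∈ S := by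
    rw [hSuniv]; exact Set.mem_univ _
  have hpt1 : pt 1 = p := by simp [hpt]
  have : Hurwitz (pt 1) := h1S
  rw [hpt1] at this
  exact this

end KHaux

/-- Kharitonov's Theorem for real interval polynomial families:
`K₁ = kpoly n lo hi {2,3}`, `K₂ = kpoly n lo hi {0,1}`,
`K₃ = kpoly n lo hi {0,3}`, `K₄ = kpoly n lo hi {1,2}`. -/
theorem kharitonov_real (n : ℕ) (lo hi : ℕ → ℝ)
    (hle : ∀ i, lo i ≤ hi i)
    (hbeyond : ∀ i, n < i → lo i = 0 ∧ hi i = 0)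
    (hlead : (0 : ℝ) ∉ Set.Icc (lo n) (hi n)) :
    (∀ p ∈ intervalFamily lo hi, Hurwitz p) ↔
      (Hurwitz (kpoly n lo hi {2, 3}) ∧ Hurwitz (kpoly n lo hi {0, 1}) ∧
       Hurwitz (kpoly n lo hi {0, 3}) ∧ Hurwitz (kpoly n lo hi {1, 2})) := by
  constructor
  · intro H
    exact ⟨H _ (KHaux.kpoly_mem n lo hi hle hbeyond _),
      H _ (KHaux.kpoly_mem n lo hi hle hbeyond _),
      H _ (KHaux.kpoly_mem n lo hi hle hbeyond _),
      H _ (KHaux.kpoly_mem n lo hi hle hbeyond _)⟩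
  · rintro ⟨h1, h2, h3, h4⟩ p hp
    rcases Nat.eq_zero_or_pos n with hn | hn
    · subst hn
      intro z hz
      exfalso
      have hdeg := KHaux.natDegree_le_of_mem hbeyond hp
      have hc0 : p.coeff 0 ≠ 0 := by
        intro h
        have hmem := hp 0
        rw [Set.mem_Icc] at hmem
        exact hlead (Set.mem_Icc.2 ⟨h ▸ hmem.1, h ▸ hmem.2⟩)
      have hpC : p = Polynomial.C (p.coeff 0) := Polynomial.eq_C_of_natDegree_le_zero hdeg
      rw [hpC, Polynomial.aeval_C, Complex.coe_algebraMap, Complex.ofReal_eq_zero] at hz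
      exact hc0 hz
    · exact KHaux.hurwitz_of_family n lo hi hle hbeyond hlead hn h1
        (fun q hq z hz => KHaux.no_imag_root n lo hi hle hbeyond hlead hn h1 h2 h3 h4 hq hz) hp
end

section
/- (Lemma 8) Let g and f be real polynomials with deg g < deg f and with g + f Hurwitz stable, and let γ > 1. Then sup_{ω∈ℝ} |f(jω)/(f(jω)+g(jω))| < γ if and only if the complex polynomial g(s) + (1 + (1/γ) e^{jθ}) f(s) is Hurwitz stable for every θ ∈ [−π, π]. -/
open Polynomial

/-- The H∞ norm of the sensitivity function `S = f/(f+g)`: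
`‖S‖_∞ = sup_{ω ∈ ℝ} |f(jω)/(f(jω)+g(jω))|`. -/
noncomputable def sensNorm (f g : ℝ[X]) : ℝ :=
  ⨆ ω : ℝ, ‖
    (Polynomial.aeval ((ω : ℂ) * Complex.I) f /
      (Polynomial.aeval ((ω : ℂ) * Complex.I) f + Polynomial.aeval ((ω : ℂ) * Complex.I) g))‖

namespace Lemma8Aux

lemma polyUB (p : ℂ[X]) : ∃ A : ℝ, 0 ≤ A ∧ ∀ z : ℂ, 1 ≤ ‖z‖ →
    ‖p.eval z‖ ≤ A * ‖z‖ ^ p.natDegree := by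
  refine ⟨∑ i ∈ Finset.range (p.natDegree + 1), ‖p.coeff i‖,
    Finset.sum_nonneg fun i _ => norm_nonneg _, fun z hz => ?_⟩
  rw [Polynomial.eval_eq_sum_range]
  calc ‖∑ i ∈ Finset.range (p.natDegree + 1), p.coeff i * z ^ i‖
      ≤ ∑ i ∈ Finset.range (p.natDegree + 1), ‖p.coeff i * z ^ i‖ := norm_sum_le _ _
    _ ≤ ∑ i ∈ Finset.range (p.natDegree + 1), ‖p.coeff i‖ * ‖z‖ ^ p.natDegree := by
        refine Finset.sum_le_sum fun i hi => ?_
        rw [norm_mul, norm_pow]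
        have : ‖z‖ ^ i ≤ ‖z‖ ^ p.natDegree :=
          pow_le_pow_right₀ hz (Nat.lt_succ_iff.mp (Finset.mem_range.mp hi))
        exact mul_le_mul_of_nonneg_left this (norm_nonneg _)
    _ = _ := by rw [← Finset.sum_mul]

lemma polyUB' (p : ℂ[X]) (n : ℕ) (hn : p.natDegree ≤ n) : ∃ A : ℝ, 0 ≤ A ∧ ∀ z : ℂ, 1 ≤ ‖z‖ →
    ‖p.eval z‖ ≤ A * ‖z‖ ^ n := by
  obtain ⟨A, hA0, hA⟩ := polyUB p
  refine ⟨A, hA0, fun z hz => (hA z hz).trans ?_⟩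
  exact mul_le_mul_of_nonneg_left (pow_le_pow_right₀ hz hn) hA0

lemma polyLB (q : ℂ[X]) (hq : 0 < q.natDegree) : ∃ R : ℝ, 1 ≤ R ∧ ∀ z : ℂ, R ≤ ‖z‖ →
    ‖q.leadingCoeff‖ / 2 * ‖z‖ ^ q.natDegree ≤ ‖q.eval z‖ := by
  have hq0 : q ≠ 0 := fun h => by simp [h] at hq
  have ha : q.leadingCoeff ≠ 0 := Polynomial.leadingCoeff_ne_zero.mpr hq0
  have ha' : (0:ℝ) < ‖q.leadingCoeff‖ := norm_pos_iff.mpr ha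
  obtain ⟨A, hA0, hA⟩ := polyUB' q.eraseLead (q.natDegree - 1) q.eraseLead_natDegree_le
  refine ⟨max 1 (2 * A / ‖q.leadingCoeff‖), le_max_left _ _, fun z hz => ?_⟩
  have hz1 : 1 ≤ ‖z‖ := le_trans (le_max_left _ _) hz
  have hz2 : 2 * A / ‖q.leadingCoeff‖ ≤ ‖z‖ := le_trans (le_max_right _ _) hz
  have hzpos : (0:ℝ) < ‖z‖ := lt_of_lt_of_le one_pos hz1
  have key : ‖q.eval z‖ ≥ ‖q.leadingCoeff * z ^ q.natDegree‖ - ‖q.eraseLead.eval z‖ := by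
    have heq : q.eval z = q.eraseLead.eval z + q.leadingCoeff * z ^ q.natDegree := by
      nth_rewrite 1 [← q.eraseLead_add_C_mul_X_pow]
      rw [Polynomial.eval_add, Polynomial.eval_mul, Polynomial.eval_C, Polynomial.eval_pow,
        Polynomial.eval_X]
    rw [heq]
    have h := norm_sub_le (q.eraseLead.eval z + q.leadingCoeff * z ^ q.natDegree)
      (q.eraseLead.eval z)
    simp only [add_sub_cancel_left] at h
    linarith
  have hre : ‖q.eraseLead.eval z‖ ≤ A * ‖z‖ ^ (q.natDegree - 1) := hA z hz1
  have hpow : ‖z‖ ^ q.natDegree = ‖z‖ * ‖z‖ ^ (q.natDegree - 1) := by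
    rw [← pow_succ']
    congr 1
    omega
  have h2 : A * ‖z‖ ^ (q.natDegree - 1) ≤ ‖q.leadingCoeff‖ / 2 * ‖z‖ ^ q.natDegree := by
    rw [hpow, ← mul_assoc]
    have hp1 : (0:ℝ) ≤ ‖z‖ ^ (q.natDegree - 1) := by positivity
    refine mul_le_mul_of_nonneg_right ?_ hp1
    rw [div_le_iff₀ ha'] at hz2
    nlinarith
  rw [norm_mul, norm_pow] at key
  nlinarith

lemma polyRatio (p q : ℂ[X]) (h : p.natDegree < q.natDegree) {ε : ℝ} (hε : 0 < ε) :
    ∃ R : ℝ, 1 ≤ R ∧ ∀ z : ℂ, R ≤ ‖z‖ → ‖p.eval z‖ ≤ ε * ‖q.eval z‖ ∧ q.eval z ≠ 0 := by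
  have hq : 0 < q.natDegree := lt_of_le_of_lt (Nat.zero_le _) h
  obtain ⟨A, hA0, hA⟩ := polyUB' p (q.natDegree - 1) (by omega)
  obtain ⟨R0, hR01, hR0⟩ := polyLB q hq
  set b : ℝ := ‖q.leadingCoeff‖ / 2 with hb
  have hb0 : 0 < b := by
    have h1 : q ≠ 0 := fun hh => by simp [hh] at hq
    have := norm_pos_iff.mpr (Polynomial.leadingCoeff_ne_zero.mpr h1)
    positivity
  refine ⟨max R0 (A / (ε * b) + 1), le_trans hR01 (le_max_left _ _), fun z hz => ?_⟩
  have hz0 : R0 ≤ ‖z‖ := le_trans (le_max_left _ _) hz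
  have hz1 : 1 ≤ ‖z‖ := le_trans hR01 hz0
  have hzA : A / (ε * b) ≤ ‖z‖ := by
    have := le_trans (le_max_right _ _) hz; linarith
  have hzpos : (0:ℝ) < ‖z‖ := lt_of_lt_of_le one_pos hz1
  have hLB : b * ‖z‖ ^ q.natDegree ≤ ‖q.eval z‖ := hR0 z hz0
  have hq0 : q.eval z ≠ 0 := by
    intro hh
    rw [hh, norm_zero] at hLB
    nlinarith [pow_pos hzpos q.natDegree]
  refine ⟨?_, hq0⟩
  have hUB : ‖p.eval z‖ ≤ A * ‖z‖ ^ (q.natDegree - 1) := hA z hz1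
  have hpow : ‖z‖ ^ q.natDegree = ‖z‖ * ‖z‖ ^ (q.natDegree - 1) := by
    rw [← pow_succ']; congr 1; omega
  have hAz : A ≤ ε * b * ‖z‖ := by
    rw [div_le_iff₀ (by positivity)] at hzA; linarith
  have hp1 : (0:ℝ) < ‖z‖ ^ (q.natDegree - 1) := pow_pos hzpos _
  calc ‖p.eval z‖ ≤ A * ‖z‖ ^ (q.natDegree - 1) := hUB
    _ ≤ (ε * b * ‖z‖) * ‖z‖ ^ (q.natDegree - 1) := by nlinarith
    _ = ε * (b * ‖z‖ ^ q.natDegree) := by rw [hpow]; ring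
    _ ≤ ε * ‖q.eval z‖ := by nlinarith

lemma aeval_eq_eval_map (p : ℝ[X]) (z : ℂ) :
    Polynomial.aeval z p = (p.map (algebraMap ℝ ℂ)).eval z := by
  rw [Polynomial.aeval_def, Polynomial.eval_map]

lemma sensNorm_eq (f g : ℝ[X]) :
    sensNorm f g = ⨆ ω : ℝ, ‖
      ((f.map (algebraMap ℝ ℂ)).eval ((ω:ℂ) * Complex.I) /
        (((g+f).map (algebraMap ℝ ℂ)).eval ((ω:ℂ) * Complex.I)))‖ := by
  unfold sensNorm
  congr 1; funext ω
  rw [Polynomial.map_add, Polynomial.eval_add, aeval_eq_eval_map, aeval_eq_eval_map,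
    add_comm ((g.map (algebraMap ℝ ℂ)).eval _)]

end Lemma8Aux

open Lemma8Aux Complex in
/-- Lemma 8 -/
theorem lemma8 (g f : ℝ[X])
    (hdeg : g.natDegree < f.natDegree) (hH : Hurwitz (g + f))
    (γ : ℝ) (hγ : 1 < γ) :
    sensNorm f g < γ ↔
      ∀ θ ∈ Set.Icc (-Real.pi) Real.pi,
        Hurwitz (g.map (algebraMap ℝ ℂ) +
          Polynomial.C (1 + (1 / (γ : ℂ)) * Complex.exp ((θ : ℂ) * Complex.I)) *
            f.map (algebraMap ℝ ℂ)) := by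
  have hγ0 : (0:ℝ) < γ := lt_trans one_pos hγ
  have hγc : (γ:ℂ) ≠ 0 := by exact_mod_cast ne_of_gt hγ0
  set Gc : ℂ[X] := g.map (algebraMap ℝ ℂ) with hGc
  set Fc : ℂ[X] := f.map (algebraMap ℝ ℂ) with hFc
  set Dc : ℂ[X] := (g+f).map (algebraMap ℝ ℂ) with hDc
  have hi : Function.Injective (algebraMap ℝ ℂ) := (algebraMap ℝ ℂ).injective
  have hdeg' : Gc.natDegree < Dc.natDegree := by
    rw [hGc, hDc, Polynomial.natDegree_map_eq_of_injective hi,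
      Polynomial.natDegree_map_eq_of_injective hi,
      Polynomial.natDegree_add_eq_right_of_natDegree_lt hdeg]
    exact hdeg
  have hDel : ∀ z : ℂ, Dc.eval z = Gc.eval z + Fc.eval z := by
    intro z; rw [hDc, Polynomial.map_add, Polynomial.eval_add, ← hGc, ← hFc]
  have hD0 : ∀ z : ℂ, 0 ≤ z.re → Dc.eval z ≠ 0 := by
    intro z hz h
    have := hH z (by rw [aeval_eq_eval_map]; exact h)
    linarith
  -- the S function
  set S : ℝ → ℝ := fun ω => ‖Fc.eval ((ω:ℂ) * I) / Dc.eval ((ω:ℂ) * I)‖ with hS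
  have hsens : sensNorm f g = ⨆ ω, S ω := sensNorm_eq f g
  have hre0 : ∀ ω : ℝ, ((ω:ℂ) * I).re = 0 := by intro ω; simp
  have hnormI : ∀ ω : ℝ, ‖(ω:ℂ) * I‖ = |ω| := by
    intro ω; rw [norm_mul, Complex.norm_I, mul_one, Complex.norm_real, Real.norm_eq_abs]
  -- tail bound
  have tail : ∀ ε : ℝ, 0 < ε → ∃ R : ℝ, 1 ≤ R ∧ ∀ z : ℂ, R ≤ ‖z‖ →
      ‖Fc.eval z / Dc.eval z‖ ≤ 1 + ε ∧ Dc.eval z ≠ 0 := by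
    intro ε hε
    obtain ⟨R, hR1, hR⟩ := polyRatio Gc Dc hdeg' hε
    refine ⟨R, hR1, fun z hz => ?_⟩
    obtain ⟨hb, hne⟩ := hR z hz
    refine ⟨?_, hne⟩
    have hFD : Fc.eval z / Dc.eval z = 1 - Gc.eval z / Dc.eval z := by
      field_simp [hne]
      linear_combination -(hDel z)
    rw [hFD]
    calc ‖1 - Gc.eval z / Dc.eval z‖ ≤ ‖(1:ℂ)‖ + ‖Gc.eval z / Dc.eval z‖ := norm_sub_le _ _
      _ ≤ 1 + ε := by
          rw [norm_one, norm_div]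
          have hDpos : (0:ℝ) < ‖Dc.eval z‖ := norm_pos_iff.mpr hne
          have : ‖Gc.eval z‖ / ‖Dc.eval z‖ ≤ ε := (div_le_iff₀ hDpos).mpr (by linarith)
          linarith
  have hcmul : Continuous fun ω : ℝ => (ω:ℂ) * I := Complex.continuous_ofReal.mul continuous_const
  have Scont : Continuous S := by
    rw [hS]
    exact continuous_norm.comp
      (((Fc.continuous.comp hcmul).div (Dc.continuous.comp hcmul))
        (fun ω => hD0 _ (hre0 ω).ge))
  have bigBound : ∃ B : ℝ, 0 ≤ B ∧ ∀ z : ℂ, 0 ≤ z.re → ‖Fc.eval z / Dc.eval z‖ ≤ B := by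
    obtain ⟨R, hR1, hR⟩ := tail 1 one_pos
    have hK : IsCompact (Metric.closedBall (0:ℂ) R ∩ {z : ℂ | 0 ≤ z.re}) :=
      (isCompact_closedBall _ _).inter_right (isClosed_le continuous_const Complex.continuous_re)
    have hcont : ContinuousOn (fun z => Fc.eval z / Dc.eval z)
        (Metric.closedBall (0:ℂ) R ∩ {z : ℂ | 0 ≤ z.re}) :=
      ContinuousOn.div Fc.continuous.continuousOn Dc.continuous.continuousOn
        (fun z hz => hD0 z hz.2)
    obtain ⟨C, hC⟩ := hK.exists_bound_of_continuousOn hcont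
    refine ⟨max C 2, le_max_of_le_right (by norm_num), fun z hz => ?_⟩
    rcases le_total ‖z‖ R with h | h
    · exact le_trans (hC z ⟨mem_closedBall_zero_iff.mpr h, hz⟩) (le_max_left _ _)
    · exact le_trans (hR z h).1 (le_max_of_le_right (by norm_num))
  have bddS : BddAbove (Set.range S) := by
    obtain ⟨B, hB0, hB⟩ := bigBound
    refine ⟨B, ?_⟩
    rintro x ⟨ω, rfl⟩
    have h := hB ((ω:ℂ)*I) (hre0 ω).ge
    exact h
  constructor
  · -- forward direction: sensNorm < γ → Hurwitz for all θ
    intro hs θ hθ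
    set c : ℂ := (1/(γ:ℂ)) * Complex.exp ((θ:ℂ)*I) with hc
    have hcabs : ‖c‖ = 1/γ := by
      rw [hc, norm_mul, norm_div, norm_one, Complex.norm_real, Real.norm_eq_abs,
        abs_of_pos hγ0, Complex.norm_exp_ofReal_mul_I, mul_one]
    obtain ⟨B, hB0, hB⟩ := bigBound
    set Cst : ℝ := sensNorm f g / γ with hCst
    have hCst1 : Cst < 1 := (div_lt_one hγ0).mpr hs
    set φ : ℂ → ℂ := fun z => c * Fc.eval z / Dc.eval z with hφ
    have hφ_bound : ∀ z : ℂ, 0 ≤ z.re → ‖φ z‖ ≤ ‖c‖ * B := by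
      intro z hz
      rw [hφ]
      simp only
      rw [mul_div_assoc, norm_mul]
      exact mul_le_mul_of_nonneg_left (hB z hz) (norm_nonneg _)
    have key : ∀ z : ℂ, 0 ≤ z.re → ‖φ z‖ ≤ Cst := by
      intro z hz
      refine PhragmenLindelof.right_half_plane_of_bounded_on_real ?_ ?_ ?_ ?_ hz
      · refine DifferentiableOn.diffContOnCl ?_
        rw [Complex.closure_setOf_lt_re]
        exact DifferentiableOn.div
          (((differentiable_const c).mul Fc.differentiable).differentiableOn)
          Dc.differentiable.differentiableOn (fun w hw => hD0 w hw)
      · refine ⟨1, one_lt_two, 0, ?_⟩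
        rw [Asymptotics.isBigO_iff]
        refine ⟨‖c‖ * B, ?_⟩
        filter_upwards [Filter.mem_inf_of_right
          (Filter.mem_principal_self {w : ℂ | 0 < w.re})] with w hw
        have h1 : ‖Real.exp (0 * ‖w‖ ^ (1:ℝ))‖ = 1 := by
          rw [zero_mul, Real.exp_zero, norm_one]
        rw [h1, mul_one]
        exact hφ_bound w (le_of_lt hw)
      · refine Filter.isBoundedUnder_of_eventually_le (a := ‖c‖ * B) ?_
        filter_upwards [Filter.eventually_ge_atTop (0:ℝ)] with x hx
        exact hφ_bound x (by simpa using hx)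
      · intro x
        have hx : S x ≤ sensNorm f g := by
          rw [hsens]; exact le_ciSup bddS x
        have h1 : ‖φ ((x:ℂ)*I)‖ = ‖c‖ * S x := by
          rw [hφ]
          simp only
          rw [mul_div_assoc, norm_mul, hS]
        rw [h1, hcabs, hCst, one_div, inv_mul_eq_div]
        gcongr
    intro z hz0
    by_contra hrez
    push_neg at hrez
    have hDz : Dc.eval z ≠ 0 := hD0 z hrez
    have heval : Gc.eval z + (1 + c) * Fc.eval z = 0 := by
      rw [map_add, map_mul, Polynomial.aeval_C] at hz0
      simp only [Polynomial.coe_aeval_eq_eval, Algebra.algebraMap_self, RingHom.id_apply] at hz0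
      exact hz0
    have heval2 : Dc.eval z + c * Fc.eval z = 0 := by
      linear_combination hDel z + heval
    have hφz : ‖φ z‖ ≤ Cst := key z hrez
    have h1 : (1 : ℂ) + φ z ≠ 0 := by
      intro h
      have h2 : φ z = -1 := by linear_combination h
      rw [h2, norm_neg, norm_one] at hφz
      linarith
    have h3 : Dc.eval z * (1 + φ z) = 0 := by
      have h4 : Dc.eval z * (1 + φ z) = Dc.eval z + c * Fc.eval z := by
        rw [hφ]
        field_simp
      rw [h4, heval2]
    exact absurd h3 (mul_ne_zero hDz h1)
  · -- backward direction
    intro hall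
    have hnoeq : ∀ ω : ℝ, S ω ≠ γ := by
      intro ω hωeq
      have hDz : Dc.eval ((ω:ℂ)*I) ≠ 0 := hD0 _ (hre0 ω).ge
      have hDz' : ‖Dc.eval ((ω:ℂ)*I)‖ ≠ 0 := by
        simpa using hDz
      rw [hS] at hωeq
      simp only at hωeq
      rw [norm_div] at hωeq
      have hFabs : ‖Fc.eval ((ω:ℂ)*I)‖ = γ * ‖Dc.eval ((ω:ℂ)*I)‖ := by
        rw [div_eq_iff hDz'] at hωeq
        linarith [hωeq]
      have hFz : Fc.eval ((ω:ℂ)*I) ≠ 0 := by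
        intro h
        rw [h, norm_zero] at hFabs
        have : ‖Dc.eval ((ω:ℂ)*I)‖ > 0 := lt_of_le_of_ne (norm_nonneg _) (Ne.symm hDz')
        nlinarith
      set w : ℂ := -(γ:ℂ) * Dc.eval ((ω:ℂ)*I) / Fc.eval ((ω:ℂ)*I) with hw
      have habsw : ‖w‖ = 1 := by
        rw [hw, norm_div, norm_mul, norm_neg, Complex.norm_real, Real.norm_eq_abs, abs_of_pos hγ0, hFabs]
        field_simp
      set θ : ℝ := w.arg with hθdef
      have hθmem : θ ∈ Set.Icc (-Real.pi) Real.pi :=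
        ⟨(Complex.neg_pi_lt_arg w).le, Complex.arg_le_pi w⟩
      have hexpw : Complex.exp ((θ:ℂ) * I) = w := by
        have h := Complex.norm_mul_exp_arg_mul_I w
        rw [habsw] at h
        simpa using h
      have hzero : Polynomial.aeval ((ω:ℂ)*I) (Gc + Polynomial.C (1 + (1/(γ:ℂ)) *
          Complex.exp ((θ:ℂ) * I)) * Fc) = 0 := by
        rw [map_add, map_mul, Polynomial.aeval_C]
        simp only [Polynomial.coe_aeval_eq_eval, Algebra.algebraMap_self, RingHom.id_apply]
        have hsimp : (1 + (1/(γ:ℂ)) * (-(γ:ℂ) * Dc.eval ((ω:ℂ)*I) / Fc.eval ((ω:ℂ)*I))) *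
            Fc.eval ((ω:ℂ)*I) = Fc.eval ((ω:ℂ)*I) - Dc.eval ((ω:ℂ)*I) := by
          field_simp
          ring
        rw [hexpw, hw, hsimp]
        linear_combination -(hDel ((ω:ℂ)*I))
      have := hall θ hθmem ((ω:ℂ)*I) hzero
      rw [hre0 ω] at this
      exact lt_irrefl 0 this
    obtain ⟨R, hR1, hR⟩ := tail ((γ-1)/2) (by linarith)
    have htail : ∀ ω : ℝ, R ≤ |ω| → S ω ≤ (1+γ)/2 := by
      intro ω hω
      have h := (hR ((ω:ℂ)*I) (by rw [hnormI]; exact hω)).1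
      rw [hS]
      simp only
      linarith
    have hlt : ∀ ω : ℝ, S ω < γ := by
      intro ω0
      by_contra hge
      push_neg at hge
      set b : ℝ := max R ω0 with hbdef
      have hbpos : 0 < b := lt_of_lt_of_le (lt_of_lt_of_le one_pos hR1) (le_max_left _ _)
      have hSb : S b ≤ (1+γ)/2 := htail b (by rw [abs_of_pos hbpos]; exact le_max_left _ _)
      have hmem : γ ∈ Set.Icc (S b) (S ω0) := ⟨by linarith, hge⟩
      obtain ⟨ω1, _, hω1⟩ := intermediate_value_Icc' (le_max_right R ω0)
        Scont.continuousOn hmem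
      exact hnoeq ω1 hω1
    obtain ⟨ωs, hωs, hmax⟩ := (isCompact_Icc (a := -R) (b := R)).exists_isMaxOn
      ⟨0, by constructor <;> linarith⟩ Scont.continuousOn
    rw [isMaxOn_iff] at hmax
    rw [hsens]
    have hub : ∀ ω, S ω ≤ max ((1+γ)/2) (S ωs) := by
      intro ω
      rcases le_total (|ω|) R with h | h
      · exact le_max_of_le_right (hmax ω (Set.mem_Icc.mpr (abs_le.mp h)))
      · exact le_max_of_le_left (htail ω h)
    exact lt_of_le_of_lt (ciSup_le hub) (max_lt (by linarith) (hlt ωs))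
end
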